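/- Let ν > 1, and let λ, c : ℕ → ℝ be summable sequences with λ_k ≥ 0, c_k ≥ 0, Σ_k λ_k > 0 and Σ_k c_k > 0. Set α* = 2(ν − 1)/((3ν − 1)·Σ_k λ_k), and define Ũ₁(β) = Σ_k α* λ_k (β + 1)/(2α*βλ_k + 2 − 2β²) and Ṽ₁(β) = Σ_k c_k·(2α*βλ_k + β³ − β² − β + 1)/(α*·(2α*βλ_k + 2 − 2β²)). Let F(β) = (1 − β)^{−1/ν}·Ṽ₁(β)/(1 − Ũ₁(β))² and Ξ = ν·(Σ_k λ_k)·(Σ_k λ_k c_k) − (ν − 1)·(Σ_k λ_k²)·(Σ_k c_k). Then there exists d ∈ ℝ such that F has derivative d at β = 0 (in the sense of HasDerivAt), and d > 0 if and only if Ξ > 0, and d < 0 if and only if Ξ < 0. -/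

import Mathlib

private lemma hasDerivAt_congr' {f g : ℝ → ℝ} {d e x : ℝ} (h : HasDerivAt f d x)
    (hfg : ∀ b, g b = f b) (hde : e = d) : HasDerivAt g e x :=
  hde ▸ h.congr_of_eventuallyEq (Filter.Eventually.of_forall hfg)

private lemma hasDerivAt_cubic (p q u v : ℝ) (x : ℝ) :
    HasDerivAt (fun b : ℝ => p * b ^ 3 + q * b ^ 2 + u * b + v)
      (3 * p * x ^ 2 + 2 * q * x + u) x := by
  have h3 := (hasDerivAt_pow 3 x).const_mul p
  have h2 := (hasDerivAt_pow 2 x).const_mul q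
  have h1 := (hasDerivAt_id x).const_mul u
  have h := ((h3.add h2).add h1).add_const v
  refine h.congr_deriv ?_
  push_cast
  ring

set_option maxHeartbeats 2000000 in
/-- Sign of the momentum derivative of the approximate loss in the
noise-dominated phase (with `τ = γ = 1`): at the `β = 0` optimal learning rate
`α* = 2(ν−1)/((3ν−1)·Tr H)`, the function
`F(β) = (1−β)^{−1/ν}·Ṽ₁(β)/(1 − Ũ₁(β))²` has a derivative `d` at `β = 0`, and the
sign of `d` equals the sign of `Ξ = ν·TrH·Tr(HC₀) − (ν−1)·TrH²·TrC₀`. -/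
theorem noise_momentum_sign
    (ν : ℝ) (hν : 1 < ν)
    (lam c : ℕ → ℝ) (hlam : ∀ k, 0 ≤ lam k) (hc : ∀ k, 0 ≤ c k)
    (hlamsum : Summable lam) (hcsum : Summable c)
    (hlampos : 0 < ∑' k, lam k) (hcpos : 0 < ∑' k, c k)
    (αstar : ℝ) (hαstar : αstar = 2 * (ν - 1) / ((3 * ν - 1) * ∑' k, lam k))
    (U1 V1 : ℝ → ℝ)
    (hU1 : ∀ β, U1 β = ∑' k, αstar * lam k * (β + 1) /
        (2 * αstar * β * lam k + 2 - 2 * β ^ 2))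
    (hV1 : ∀ β, V1 β = ∑' k, c k * (2 * αstar * β * lam k + β ^ 3 - β ^ 2 - β + 1) /
        (αstar * (2 * αstar * β * lam k + 2 - 2 * β ^ 2)))
    (Ξ : ℝ)
    (hΞ : Ξ = ν * (∑' k, lam k) * (∑' k, lam k * c k)
        - (ν - 1) * (∑' k, lam k ^ 2) * (∑' k, c k)) :
    ∃ d : ℝ,
      HasDerivAt (fun β : ℝ => (1 - β) ^ (-(1 / ν)) * V1 β / (1 - U1 β) ^ 2) d 0 ∧
      (0 < d ↔ 0 < Ξ) ∧ (d < 0 ↔ Ξ < 0) := by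
  have hν0 : (0:ℝ) < ν := by linarith
  have hν1 : (0:ℝ) < ν - 1 := by linarith
  have hν3 : (0:ℝ) < 3 * ν - 1 := by linarith
  set S := ∑' k, lam k with hSdef
  set S2 := ∑' k, lam k ^ 2 with hS2def
  set C := ∑' k, c k with hCdef
  set LC := ∑' k, lam k * c k with hLCdef
  have hα : 0 < αstar := by rw [hαstar]; positivity
  have hlamle : ∀ k, lam k ≤ S := fun k => hlamsum.le_tsum k fun j _ => hlam j
  have hS2sum : Summable fun k => lam k ^ 2 := by
    refine Summable.of_nonneg_of_le (fun k => sq_nonneg _) (fun k => ?_) (hlamsum.mul_left S)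
    have := mul_le_mul_of_nonneg_right (hlamle k) (hlam k)
    nlinarith [this]
  have hLCsum : Summable fun k => lam k * c k := by
    refine Summable.of_nonneg_of_le (fun k => mul_nonneg (hlam k) (hc k))
      (fun k => ?_) (hcsum.mul_left S)
    exact mul_le_mul_of_nonneg_right (hlamle k) (hc k)
  -- the ball on which we differentiate termwise
  set r : ℝ := min (1/2) (1 / (4 * (αstar * S + 1))) with hrdef
  have hrpos : 0 < r := lt_min (by norm_num) (by positivity)
  have hrhalf : r ≤ 1/2 := min_le_left _ _
  have hr4 : r * (4 * (αstar * S + 1)) ≤ 1 := by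
    have h := min_le_right (1/2 : ℝ) (1 / (4 * (αstar * S + 1)))
    rw [le_div_iff₀ (by positivity)] at h
    exact h
  set t : Set ℝ := Metric.ball (0:ℝ) r with htdef
  have ht : IsOpen t := Metric.isOpen_ball
  have htc : IsPreconnected t := (convex_ball (0:ℝ) r).isPreconnected
  have h0t : (0:ℝ) ∈ t := Metric.mem_ball_self hrpos
  have hmem : ∀ β ∈ t, |β| < r := by
    intro β hβ
    simpa [htdef, Metric.mem_ball, Real.dist_eq] using hβ
  have hαS : 0 ≤ αstar * S := mul_nonneg hα.le hlampos.le
  -- basic bounds on β ∈ t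
  have hbounds : ∀ β ∈ t, -(1/2:ℝ) ≤ β ∧ β ≤ 1/2 ∧ β^2 ≤ 1/4 := by
    intro β hβ
    have h := abs_lt.mp (hmem β hβ)
    have h1 : -(1/2:ℝ) ≤ β := by linarith [h.1, hrhalf]
    have h2 : β ≤ 1/2 := by linarith [h.2, hrhalf]
    have h1' : (0:ℝ) ≤ 1/2 + β := by linarith
    have h2' : (0:ℝ) ≤ 1/2 - β := by linarith
    exact ⟨h1, h2, by nlinarith [mul_nonneg h2' h1']⟩
  -- the denominator D is between 1 and 3 on t
  have hD : ∀ (k : ℕ), ∀ β ∈ t, 1 ≤ 2 * αstar * β * lam k + 2 - 2 * β ^ 2 ∧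
      2 * αstar * β * lam k + 2 - 2 * β ^ 2 ≤ 3 := by
    intro k β hβ
    obtain ⟨hb1, hb2, hb3⟩ := hbounds β hβ
    have habs := abs_lt.mp (hmem β hβ)
    have ha0 : 0 ≤ αstar * lam k := mul_nonneg hα.le (hlam k)
    have haS : αstar * lam k ≤ αstar * S := mul_le_mul_of_nonneg_left (hlamle k) hα.le
    have key1 : αstar * lam k * β ≤ αstar * S * r := by
      calc αstar * lam k * β ≤ αstar * lam k * r := by nlinarith [habs.2]
        _ ≤ αstar * S * r := by nlinarith [hrpos]
    have key2 : -(αstar * S * r) ≤ αstar * lam k * β := by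
      have : -r ≤ β := by linarith [habs.1]
      nlinarith [hrpos]
    have key3 : αstar * S * r ≤ 1/4 := by nlinarith [hrpos]
    constructor <;> nlinarith
  -- term derivatives
  set gU' : ℕ → ℝ → ℝ := fun k β =>
    (αstar * lam k * (2 * αstar * β * lam k + 2 - 2 * β ^ 2)
      - αstar * lam k * (β + 1) * (2 * αstar * lam k - 4 * β)) /
    (2 * αstar * β * lam k + 2 - 2 * β ^ 2) ^ 2 with hgU'def
  set gV' : ℕ → ℝ → ℝ := fun k β =>
    (c k * (2 * αstar * lam k + 3 * β ^ 2 - 2 * β - 1) *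
        (αstar * (2 * αstar * β * lam k + 2 - 2 * β ^ 2))
      - c k * (2 * αstar * β * lam k + β ^ 3 - β ^ 2 - β + 1) *
        (αstar * (2 * αstar * lam k - 4 * β))) /
    (αstar * (2 * αstar * β * lam k + 2 - 2 * β ^ 2)) ^ 2 with hgV'def
  have hfU : ∀ (k : ℕ), ∀ β ∈ t,
      HasDerivAt (fun b : ℝ => αstar * lam k * (b + 1) /
        (2 * αstar * b * lam k + 2 - 2 * b ^ 2)) (gU' k β) β := by
    intro k β hβ
    have hDne : 2 * αstar * β * lam k + 2 - 2 * β ^ 2 ≠ 0 := by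
      have := (hD k β hβ).1; linarith
    have hnum : HasDerivAt (fun b : ℝ => αstar * lam k * (b + 1)) (αstar * lam k) β :=
      hasDerivAt_congr' (hasDerivAt_cubic 0 0 (αstar * lam k) (αstar * lam k) β)
        (fun b => by ring) (by ring)
    have hden : HasDerivAt (fun b : ℝ => 2 * αstar * b * lam k + 2 - 2 * b ^ 2)
        (2 * αstar * lam k - 4 * β) β :=
      hasDerivAt_congr' (hasDerivAt_cubic 0 (-2) (2 * αstar * lam k) 2 β)
        (fun b => by ring) (by ring)
    exact hnum.div hden hDne
  have hfV : ∀ (k : ℕ), ∀ β ∈ t,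
      HasDerivAt (fun b : ℝ => c k * (2 * αstar * b * lam k + b ^ 3 - b ^ 2 - b + 1) /
        (αstar * (2 * αstar * b * lam k + 2 - 2 * b ^ 2))) (gV' k β) β := by
    intro k β hβ
    have hDne : αstar * (2 * αstar * β * lam k + 2 - 2 * β ^ 2) ≠ 0 := by
      have := (hD k β hβ).1
      have : 0 < αstar * (2 * αstar * β * lam k + 2 - 2 * β ^ 2) := by nlinarith
      linarith
    have hnum : HasDerivAt (fun b : ℝ => c k * (2 * αstar * b * lam k + b ^ 3 - b ^ 2 - b + 1))
        (c k * (2 * αstar * lam k + 3 * β ^ 2 - 2 * β - 1)) β :=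
      hasDerivAt_congr' (hasDerivAt_cubic (c k) (-(c k)) (c k * (2 * αstar * lam k - 1)) (c k) β)
        (fun b => by ring) (by ring)
    have hden : HasDerivAt (fun b : ℝ => αstar * (2 * αstar * b * lam k + 2 - 2 * b ^ 2))
        (αstar * (2 * αstar * lam k - 4 * β)) β :=
      hasDerivAt_congr' (hasDerivAt_cubic 0 (-(2 * αstar)) (2 * αstar * αstar * lam k)
        (2 * αstar) β) (fun b => by ring) (by ring)
    exact hnum.div hden hDne
  -- bounds on the derivatives
  have hbU : ∀ (k : ℕ), ∀ β ∈ t, ‖gU' k β‖ ≤ αstar * (2 * αstar * S + 5) * lam k := by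
    intro k β hβ
    obtain ⟨hb1, hb2, hb3⟩ := hbounds β hβ
    obtain ⟨hD1, hD3⟩ := hD k β hβ
    have ha0 : 0 ≤ αstar * lam k := mul_nonneg hα.le (hlam k)
    have haS : αstar * lam k ≤ αstar * S := mul_le_mul_of_nonneg_left (hlamle k) hα.le
    have hD2 : 1 ≤ (2 * αstar * β * lam k + 2 - 2 * β ^ 2) ^ 2 := by nlinarith
    rw [hgU'def, Real.norm_eq_abs, abs_div,
      abs_pow, sq_abs]
    refine le_trans (div_le_self (abs_nonneg _) hD2) ?_
    have hx1 : (0:ℝ) ≤ β + 1/2 := by linarith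
    have hx2 : (0:ℝ) ≤ 1/2 - β := by linarith
    have hx3 : (0:ℝ) ≤ αstar * S - αstar * lam k := by linarith
    refine abs_le.mpr ⟨?_, ?_⟩ <;>
      nlinarith [mul_nonneg ha0 hx1, mul_nonneg ha0 hx2, mul_nonneg ha0 hx3,
        mul_nonneg ha0 (sq_nonneg β),
        mul_le_mul_of_nonneg_left hb3 ha0, mul_nonneg ha0 ha0, hαS]
  have hbV : ∀ (k : ℕ), ∀ β ∈ t, ‖gV' k β‖ ≤ (2 + 4 * αstar * S) / αstar * c k := by
    intro k β hβ
    obtain ⟨hb1, hb2, hb3⟩ := hbounds β hβ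
    obtain ⟨hD1, hD3⟩ := hD k β hβ
    have ha0 : 0 ≤ αstar * lam k := mul_nonneg hα.le (hlam k)
    have haS : αstar * lam k ≤ αstar * S := mul_le_mul_of_nonneg_left (hlamle k) hα.le
    have hβ3u : β ^ 3 ≤ 1/8 := by nlinarith [sq_nonneg (β - 1/2), sq_nonneg (β + 1/2)]
    have hβ3l : -(1/8:ℝ) ≤ β ^ 3 := by nlinarith [sq_nonneg (β - 1/2), sq_nonneg (β + 1/2)]
    -- bound on the bracket N'D - ND'
    have hB : |(2 * αstar * lam k + 3 * β ^ 2 - 2 * β - 1) *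
          (2 * αstar * β * lam k + 2 - 2 * β ^ 2)
        - (2 * αstar * β * lam k + β ^ 3 - β ^ 2 - β + 1) * (2 * αstar * lam k - 4 * β)|
        ≤ 2 + 4 * αstar * S := by
      have hy1 : (0:ℝ) ≤ 2 - β ^ 2 := by linarith
      refine abs_le.mpr ⟨?_, ?_⟩ <;>
        nlinarith [mul_nonneg ha0 (sq_nonneg β),
          mul_le_mul_of_nonneg_left hb3 ha0,
          mul_le_mul_of_nonneg_left hβ3u ha0,
          mul_le_mul_of_nonneg_left hβ3l ha0,
          sq_nonneg (1 - β ^ 2),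
          mul_nonneg (sq_nonneg β) hy1,
          hαS, haS, ha0]
    have hnum_eq : c k * (2 * αstar * lam k + 3 * β ^ 2 - 2 * β - 1) *
          (αstar * (2 * αstar * β * lam k + 2 - 2 * β ^ 2))
        - c k * (2 * αstar * β * lam k + β ^ 3 - β ^ 2 - β + 1) *
          (αstar * (2 * αstar * lam k - 4 * β))
        = c k * αstar * ((2 * αstar * lam k + 3 * β ^ 2 - 2 * β - 1) *
            (2 * αstar * β * lam k + 2 - 2 * β ^ 2)
          - (2 * αstar * β * lam k + β ^ 3 - β ^ 2 - β + 1) * (2 * αstar * lam k - 4 * β)) := by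
      ring
    have hnum_le : |c k * (2 * αstar * lam k + 3 * β ^ 2 - 2 * β - 1) *
          (αstar * (2 * αstar * β * lam k + 2 - 2 * β ^ 2))
        - c k * (2 * αstar * β * lam k + β ^ 3 - β ^ 2 - β + 1) *
          (αstar * (2 * αstar * lam k - 4 * β))|
        ≤ (2 + 4 * αstar * S) * αstar * c k := by
      rw [hnum_eq, abs_mul, abs_of_nonneg (mul_nonneg (hc k) hα.le)]
      calc c k * αstar * |_| ≤ c k * αstar * (2 + 4 * αstar * S) :=
            mul_le_mul_of_nonneg_left hB (mul_nonneg (hc k) hα.le)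
        _ = (2 + 4 * αstar * S) * αstar * c k := by ring
    have hsq : αstar ^ 2 ≤ (αstar * (2 * αstar * β * lam k + 2 - 2 * β ^ 2)) ^ 2 := by
      have hz : 0 ≤ (2 * αstar * β * lam k + 2 - 2 * β ^ 2 - 1) *
          (2 * αstar * β * lam k + 2 - 2 * β ^ 2 + 1) :=
        mul_nonneg (by linarith) (by linarith)
      nlinarith [mul_nonneg (mul_nonneg hα.le hα.le) hz]
    rw [hgV'def, Real.norm_eq_abs, abs_div,
      abs_pow, sq_abs]
    calc _ ≤ |c k * (2 * αstar * lam k + 3 * β ^ 2 - 2 * β - 1) *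
          (αstar * (2 * αstar * β * lam k + 2 - 2 * β ^ 2))
        - c k * (2 * αstar * β * lam k + β ^ 3 - β ^ 2 - β + 1) *
          (αstar * (2 * αstar * lam k - 4 * β))| / αstar ^ 2 :=
          div_le_div_of_nonneg_left (abs_nonneg _) (pow_pos hα 2) hsq
      _ ≤ ((2 + 4 * αstar * S) * αstar * c k) / αstar ^ 2 :=
          (div_le_div_iff_of_pos_right (pow_pos hα 2)).mpr hnum_le
      _ = (2 + 4 * αstar * S) / αstar * c k := by field_simp
  -- summability at 0
  have hU0sum : Summable fun k => αstar * lam k * ((0:ℝ) + 1) /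
      (2 * αstar * 0 * lam k + 2 - 2 * (0:ℝ) ^ 2) := by
    refine (hlamsum.mul_left (αstar / 2)).congr fun k => ?_
    have e : (2 * αstar * (0:ℝ) * lam k + 2 - 2 * (0:ℝ) ^ 2) = 2 := by norm_num
    rw [e]
    ring
  have hV0sum : Summable fun k => c k * (2 * αstar * 0 * lam k + (0:ℝ) ^ 3 - 0 ^ 2 - 0 + 1) /
      (αstar * (2 * αstar * 0 * lam k + 2 - 2 * (0:ℝ) ^ 2)) := by
    refine (hcsum.mul_left (1 / (2 * αstar))).congr fun k => ?_
    have e : (2 * αstar * (0:ℝ) * lam k + 2 - 2 * (0:ℝ) ^ 2) = 2 := by norm_num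
    have e2 : (2 * αstar * (0:ℝ) * lam k + (0:ℝ) ^ 3 - 0 ^ 2 - 0 + 1) = 1 := by norm_num
    rw [e, e2, mul_one, eq_div_iff (by positivity : αstar * 2 ≠ 0)]
    field_simp
  -- termwise differentiation of U1 and V1
  have hUd : HasDerivAt (fun z : ℝ => ∑' k, αstar * lam k * (z + 1) /
      (2 * αstar * z * lam k + 2 - 2 * z ^ 2)) (∑' k, gU' k 0) 0 :=
    hasDerivAt_tsum_of_isPreconnected (hlamsum.mul_left (αstar * (2 * αstar * S + 5)))
      ht htc hfU hbU h0t hU0sum h0t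
  have hVd : HasDerivAt (fun z : ℝ => ∑' k, c k * (2 * αstar * z * lam k + z ^ 3 - z ^ 2 - z + 1) /
      (αstar * (2 * αstar * z * lam k + 2 - 2 * z ^ 2))) (∑' k, gV' k 0) 0 :=
    hasDerivAt_tsum_of_isPreconnected (hcsum.mul_left ((2 + 4 * αstar * S) / αstar))
      ht htc hfV hbV h0t hV0sum h0t
  -- values of the derivative sums
  have hUval : (∑' k, gU' k 0) = αstar / 2 * S - αstar ^ 2 / 2 * S2 := by
    have h : ∀ k, gU' k 0 = αstar / 2 * lam k - αstar ^ 2 / 2 * lam k ^ 2 := by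
      intro k
      rw [hgU'def]
      have e : (2 * αstar * (0:ℝ) * lam k + 2 - 2 * (0:ℝ) ^ 2) = 2 := by norm_num
      simp only []
      rw [e]
      ring
    rw [tsum_congr h, Summable.tsum_sub (hlamsum.mul_left (αstar / 2)) (hS2sum.mul_left (αstar ^ 2 / 2)),
      tsum_mul_left, tsum_mul_left]
  have hVval : (∑' k, gV' k 0) = (1:ℝ) / 2 * LC - 1 / (2 * αstar) * C := by
    have h : ∀ k, gV' k 0 = (1:ℝ) / 2 * (lam k * c k) - 1 / (2 * αstar) * c k := by
      intro k
      rw [hgV'def]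
      have e : (2 * αstar * (0:ℝ) * lam k + 2 - 2 * (0:ℝ) ^ 2) = 2 := by norm_num
      simp only []
      rw [e, div_eq_iff (by positivity : (αstar * 2) ^ 2 ≠ 0)]
      field_simp
      ring
    rw [tsum_congr h, Summable.tsum_sub (hLCsum.mul_left (1/2)) (hcsum.mul_left (1 / (2 * αstar))),
      tsum_mul_left, tsum_mul_left]
  -- derivatives of U1 and V1
  have hU1eq : U1 = fun z : ℝ => ∑' k, αstar * lam k * (z + 1) /
      (2 * αstar * z * lam k + 2 - 2 * z ^ 2) := funext hU1
  have hV1eq : V1 = fun z : ℝ => ∑' k, c k * (2 * αstar * z * lam k + z ^ 3 - z ^ 2 - z + 1) /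
      (αstar * (2 * αstar * z * lam k + 2 - 2 * z ^ 2)) := funext hV1
  have hU1d : HasDerivAt U1 (αstar / 2 * S - αstar ^ 2 / 2 * S2) 0 := by
    rw [hU1eq, ← hUval]; exact hUd
  have hV1d : HasDerivAt V1 ((1:ℝ) / 2 * LC - 1 / (2 * αstar) * C) 0 := by
    rw [hV1eq, ← hVval]; exact hVd
  -- values at 0
  have hU10 : U1 0 = (ν - 1) / (3 * ν - 1) := by
    have h : U1 0 = αstar / 2 * S := by
      rw [hU1 0]
      have h2 : ∀ k : ℕ, αstar * lam k * ((0:ℝ) + 1) /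
          (2 * αstar * 0 * lam k + 2 - 2 * (0:ℝ) ^ 2) = αstar / 2 * lam k := by
        intro k
        have e : (2 * αstar * (0:ℝ) * lam k + 2 - 2 * (0:ℝ) ^ 2) = 2 := by norm_num
        rw [e]
        ring
      rw [tsum_congr h2, tsum_mul_left]
    rw [h, hαstar]
    field_simp
  have hV10 : V1 0 = 1 / (2 * αstar) * C := by
    rw [hV1 0]
    have h2 : ∀ k : ℕ, c k * (2 * αstar * 0 * lam k + (0:ℝ) ^ 3 - 0 ^ 2 - 0 + 1) /
        (αstar * (2 * αstar * 0 * lam k + 2 - 2 * (0:ℝ) ^ 2)) = 1 / (2 * αstar) * c k := by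
      intro k
      have e : (2 * αstar * (0:ℝ) * lam k + 2 - 2 * (0:ℝ) ^ 2) = 2 := by norm_num
      have e2 : (2 * αstar * (0:ℝ) * lam k + (0:ℝ) ^ 3 - 0 ^ 2 - 0 + 1) = 1 := by norm_num
      rw [e, e2, mul_one, div_eq_iff (by positivity : αstar * 2 ≠ 0)]
      field_simp
    rw [tsum_congr h2, tsum_mul_left]
  have hU10lt : U1 0 < 1 := by
    rw [hU10]
    rw [div_lt_one hν3]
    linarith
  have hdenne : (1 - U1 0) ^ 2 ≠ 0 := pow_ne_zero 2 (by linarith)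
  -- the rpow factor
  have hone : ((1:ℝ) - 0) ^ (-(1 / ν)) = 1 := by rw [sub_zero, Real.one_rpow]
  have hgd : HasDerivAt (fun β : ℝ => (1 - β) ^ (-(1 / ν))) (1 / ν) 0 := by
    have hbase : HasDerivAt (fun β : ℝ => 1 - β) (-1) 0 := by
      simpa using (hasDerivAt_id (0:ℝ)).const_sub 1
    have h := hbase.rpow_const (p := -(1 / ν)) (Or.inl (by norm_num))
    have h2 : (-1 : ℝ) * (-(1 / ν)) * ((1:ℝ) - 0) ^ (-(1 / ν) - 1) = 1 / ν := by
      rw [sub_zero, Real.one_rpow]; ring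
    rw [h2] at h
    exact h
  -- assemble the derivative of F
  have hnum := hgd.mul hV1d
  have hden := ((hU1d.const_sub 1).pow 2)
  have hF := hnum.div hden hdenne
  have hSne : S ≠ 0 := ne_of_gt hlampos
  have hp : (0:ℝ) < (3 * ν - 1) ^ 2 / (8 * ν ^ 3 * S) :=
    div_pos (pow_pos hν3 2) (mul_pos (mul_pos (by norm_num) (pow_pos hν0 3)) hlampos)
  have hd2 : HasDerivAt (fun β : ℝ => (1 - β) ^ (-(1 / ν)) * V1 β / (1 - U1 β) ^ 2)
      (Ξ * ((3 * ν - 1) ^ 2 / (8 * ν ^ 3 * S))) 0 := by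
    have hν0' : ν ≠ 0 := ne_of_gt hν0
    have hν1' : ν - 1 ≠ 0 := ne_of_gt hν1
    have hν3' : 3 * ν - 1 ≠ 0 := ne_of_gt hν3
    have hU0' : (1:ℝ) - U1 0 = 2 * ν / (3 * ν - 1) := by
      rw [hU10, eq_div_iff hν3', sub_mul, div_mul_cancel₀ _ hν3']
      ring
    have h2ν : (((2 * ν / (3 * ν - 1)) ^ 2) ^ 2 : ℝ) ≠ 0 :=
      ne_of_gt (pow_pos (pow_pos (div_pos (by linarith) hν3) 2) 2)
    refine hF.congr_deriv ?_
    symm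
    simp only [Pi.pow_apply, Pi.mul_apply]
    rw [hone, hV10, hU0', hΞ, hαstar]
    rw [eq_div_iff h2ν]
    push_cast
    field_simp
    ring
  refine ⟨_, hd2, ?_, ?_⟩
  · constructor
    · intro h
      nlinarith [hp]
    · intro h
      exact mul_pos h hp
  · constructor
    · intro h
      nlinarith [hp]
    · intro h
      exact mul_neg_of_neg_of_pos h hp
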